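/- Let d ≥ 1, Φ ≥ 1, t ≥ 1, and Ψ ≥ 1 be integers, and let V ∈ ℤ^{d×d} be invertible with all entries of absolute value at most Φ. Set L = lcm{1, 2, …, ⌊Φ^d · d^{d/2}⌋} and M = t·Ψ·L. Then L·V^{-1} is an integer matrix, and for all b, r ∈ ℤ^d with b ≡ r (mod M) coordinatewise, the vector (Ψ·V)^{-1}(b − r) lies in t·ℤ^d. -/

import Mathlib

open Matrix

lemma hadamard' (d : ℕ) (A : Matrix (Fin d) (Fin d) ℝ) :
    |A.det| ≤ ∏ i : Fin d, Real.sqrt (∑ j, (A i j) ^ 2) := by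
  haveI : Fact (Module.finrank ℝ (EuclideanSpace ℝ (Fin d)) = d) :=
    ⟨finrank_euclideanSpace_fin⟩
  set b := EuclideanSpace.basisFun (Fin d) ℝ
  set o := b.toBasis.orientation
  set v : Fin d → EuclideanSpace ℝ (Fin d) :=
    fun i => (EuclideanSpace.equiv (Fin d) ℝ).symm (fun j => A i j) with hv
  have h1 : |b.toBasis.det v| ≤ ∏ i : Fin d, ‖v i‖ := by
    rw [← o.volumeForm_robust' b v]
    exact o.abs_volumeForm_apply_le v
  have h2 : b.toBasis.det v = A.det := by
    rw [Module.Basis.det_apply, ← Matrix.det_transpose]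
    congr 1
  have h3 : ∀ i, ‖v i‖ = Real.sqrt (∑ j, (A i j) ^ 2) := by
    intro i
    rw [EuclideanSpace.norm_eq]
    congr 1
    exact Finset.sum_congr rfl fun j _ => by simp [v, sq_abs]
  rw [← h2]
  calc |b.toBasis.det v| ≤ ∏ i : Fin d, ‖v i‖ := h1
    _ = _ := by simp_rw [h3]

/-- Let `V ∈ ℤ^{d×d}` be invertible with entries of absolute value at most `Φ`, let
`L = lcm{1, …, ⌊Φᵈ · d^{d/2}⌋}` and `M = t·Ψ·L`.  Then `L·V⁻¹` is an integer
matrix, and whenever `b ≡ r (mod M)` coordinatewise, the vector `(Ψ·V)⁻¹(b − r)`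
lies in `t·ℤᵈ`. -/
theorem scaled_inverse_integrality
    (d Φ t Ψ : ℕ) (hd : 1 ≤ d) (hΦ : 1 ≤ Φ) (ht : 1 ≤ t) (hΨ : 1 ≤ Ψ)
    (V : Matrix (Fin d) (Fin d) ℤ) (hV : V.det ≠ 0)
    (hVbound : ∀ i j, |V i j| ≤ (Φ : ℤ))
    (L M : ℕ)
    (hL : L = (Finset.Icc 1 (Nat.floor ((Φ : ℝ) ^ d * (d : ℝ) ^ ((d : ℝ) / 2)))).lcm id)
    (hM : M = t * Ψ * L) :
    (∃ W : Matrix (Fin d) (Fin d) ℤ,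
      (L : ℝ) • (V.map (Int.cast : ℤ → ℝ))⁻¹ = W.map (Int.cast : ℤ → ℝ)) ∧
    ∀ b r : Fin d → ℤ, (∀ j, (M : ℤ) ∣ b j - r j) →
      ∀ j : Fin d, ∃ z : ℤ,
        (((Ψ : ℝ) • V.map (Int.cast : ℤ → ℝ))⁻¹).mulVec
          (fun i => ((b i - r i : ℤ) : ℝ)) j = (t : ℝ) * (z : ℝ) := by
  set Vr := V.map (Int.cast : ℤ → ℝ) with hVr
  have hdetmap : Vr.det = ((V.det : ℤ) : ℝ) := by
    simpa using (RingHom.map_det (Int.castRingHom ℝ) V).symm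
  -- Hadamard bound
  have hdle : |((V.det : ℤ) : ℝ)| ≤ (Φ : ℝ) ^ d * (d : ℝ) ^ ((d : ℝ) / 2) := by
    have h := hadamard' d Vr
    have hrow : ∀ i : Fin d, Real.sqrt (∑ j, (Vr i j) ^ 2) ≤ (Φ : ℝ) * Real.sqrt d := by
      intro i
      have hsum : (∑ j, (Vr i j) ^ 2) ≤ (d : ℝ) * (Φ : ℝ) ^ 2 := by
        calc (∑ j, (Vr i j) ^ 2) ≤ ∑ _j : Fin d, (Φ : ℝ) ^ 2 :=
              Finset.sum_le_sum (fun j _ => by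
                have h1 : |Vr i j| ≤ (Φ : ℝ) := by
                  have := hVbound i j
                  simp only [hVr, Matrix.map_apply]
                  exact_mod_cast this
                calc (Vr i j) ^ 2 = |Vr i j| ^ 2 := (sq_abs _).symm
                  _ ≤ (Φ : ℝ) ^ 2 := pow_le_pow_left₀ (abs_nonneg _) h1 2)
          _ = (d : ℝ) * (Φ : ℝ) ^ 2 := by simp [Finset.sum_const, mul_comm]
      calc Real.sqrt (∑ j, (Vr i j) ^ 2) ≤ Real.sqrt ((d : ℝ) * (Φ : ℝ) ^ 2) :=
            Real.sqrt_le_sqrt hsum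
        _ = (Φ : ℝ) * Real.sqrt d := by
            rw [Real.sqrt_mul (by positivity), Real.sqrt_sq (by positivity)]; ring
    have hprod : (∏ i : Fin d, Real.sqrt (∑ j, (Vr i j) ^ 2))
        ≤ ∏ _i : Fin d, (Φ : ℝ) * Real.sqrt d :=
      Finset.prod_le_prod (fun i _ => Real.sqrt_nonneg _) (fun i _ => hrow i)
    have hpow : (∏ _i : Fin d, (Φ : ℝ) * Real.sqrt d)
        = (Φ : ℝ) ^ d * (d : ℝ) ^ ((d : ℝ) / 2) := by
      rw [Finset.prod_const, Finset.card_univ, Fintype.card_fin, mul_pow]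
      congr 1
      rw [Real.sqrt_eq_rpow, ← Real.rpow_natCast ((d:ℝ) ^ ((1:ℝ)/2)) d,
        ← Real.rpow_mul (by positivity)]
      ring_nf
    rw [← hdetmap]
    exact h.trans (hprod.trans_eq hpow)
  -- det divides L
  have hfloor : V.det.natAbs ≤ Nat.floor ((Φ : ℝ) ^ d * (d : ℝ) ^ ((d : ℝ) / 2)) := by
    apply Nat.le_floor
    calc ((V.det.natAbs : ℕ) : ℝ) = |((V.det : ℤ) : ℝ)| := by
          rw [Nat.cast_natAbs, Int.cast_abs]
      _ ≤ _ := hdle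
  have hmem : V.det.natAbs ∈ Finset.Icc 1
      (Nat.floor ((Φ : ℝ) ^ d * (d : ℝ) ^ ((d : ℝ) / 2))) := by
    rw [Finset.mem_Icc]
    exact ⟨Nat.one_le_iff_ne_zero.2 (Int.natAbs_ne_zero.2 hV), hfloor⟩
  have hdvdL : (V.det : ℤ) ∣ (L : ℤ) := by
    have h1 : V.det.natAbs ∣ L := by
      rw [hL]; exact Finset.dvd_lcm hmem
    exact (Int.natAbs_dvd).1 (Int.natCast_dvd_natCast.2 h1)
  have hLne : (L : ℕ) ≠ 0 := by
    rw [hL]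
    intro h
    obtain ⟨x, hx, hx0⟩ := Finset.lcm_eq_zero_iff.1 h
    simp only [id_eq] at hx0
    subst hx0
    have := Finset.mem_Icc.1 hx
    omega
  set k : ℤ := (L : ℤ) / V.det with hk
  have hkD : k * V.det = (L : ℤ) := Int.ediv_mul_cancel hdvdL
  set W : Matrix (Fin d) (Fin d) ℤ := k • V.adjugate with hWdef
  have hdetR : Vr.det ≠ 0 := by rw [hdetmap]; exact_mod_cast hV
  have hDne : ((V.det : ℤ) : ℝ) ≠ 0 := by exact_mod_cast hV
  have hkR : (k : ℝ) * ((V.det : ℤ) : ℝ) = (L : ℝ) := by exact_mod_cast hkD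
  have hW : (L : ℝ) • Vr⁻¹ = W.map (Int.cast : ℤ → ℝ) := by
    have hadj : Vr.adjugate = (V.adjugate).map (Int.cast : ℤ → ℝ) :=
      ((Int.castRingHom ℝ).map_adjugate V).symm
    rw [Matrix.inv_def, Ring.inverse_eq_inv']
    ext i j
    simp only [Matrix.smul_apply, Matrix.map_apply, hWdef, smul_eq_mul, hadj, hdetmap]
    push_cast
    rw [← hkR, mul_assoc, show (V.map fun x => (x:ℝ)).det = ((V.det:ℤ):ℝ) from hdetmap,
      mul_inv_cancel_left₀ hDne]
  refine ⟨⟨W, hW⟩, ?_⟩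
  intro b r hbr j
  choose c hc using hbr
  refine ⟨W.mulVec c j, ?_⟩
  have hΨne : ((Ψ : ℕ) : ℝ) ≠ 0 := by positivity
  have hLneR : ((L : ℕ) : ℝ) ≠ 0 := by exact_mod_cast hLne
  have hA : ((Ψ : ℝ) • Vr)⁻¹ = (Ψ : ℝ)⁻¹ • Vr⁻¹ := by
    apply Matrix.inv_eq_right_inv
    rw [Matrix.smul_mul, Matrix.mul_smul,
      Matrix.mul_nonsing_inv _ (isUnit_iff_ne_zero.2 hdetR), smul_smul,
      mul_inv_cancel₀ hΨne, one_smul]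
  have hWe : ∀ a b', (Vr⁻¹) a b' = (L : ℝ)⁻¹ * ((W a b' : ℤ) : ℝ) := by
    intro a b'
    have h2 := congrFun (congrFun hW a) b'
    simp only [Matrix.smul_apply, smul_eq_mul, Matrix.map_apply] at h2
    rw [← h2]
    field_simp
  have hx : (fun i => ((b i - r i : ℤ) : ℝ)) = fun i => (M : ℝ) * ((c i : ℤ) : ℝ) := by
    funext i
    rw [hc i]
    push_cast
    ring
  rw [hA, hx]
  simp only [Matrix.mulVec, dotProduct, Matrix.smul_apply, smul_eq_mul]
  push_cast
  rw [Finset.mul_sum]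
  apply Finset.sum_congr rfl
  intro i _
  rw [hWe j i]
  have hMr : ((M : ℕ) : ℝ) = (t : ℝ) * (Ψ : ℝ) * (L : ℝ) := by
    rw [hM]; push_cast; ring
  rw [hMr]
  field_simp
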